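/- For a standard normal Z, σ > 0 and x ≥ 0 (writing u = x/σ), one has 2σφ(u) - 2σu(1 - Φ(u)) ≤ sqrt(σ² + x²) - x. -/

import Mathlib

open MeasureTheory ProbabilityTheory

namespace Stmt13Aux

open Real Set Filter Topology

noncomputable def g (t : ℝ) : ℝ := Real.exp (-t ^ 2 / 2)

lemma g_eq (t : ℝ) : g t = Real.exp (-(1/2) * t ^ 2) := by
  unfold g; ring_nf

lemma g_nonneg (t : ℝ) : 0 ≤ g t := (Real.exp_pos _).le

lemma cont_g : Continuous g := by
  unfold g; continuity

lemma int_g : Integrable g := by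
  have h := integrable_exp_neg_mul_sq (b := (1/2:ℝ)) (by norm_num)
  exact h.congr (Filter.Eventually.of_forall fun t => (g_eq t).symm)

lemma int_tg : Integrable (fun t : ℝ => t * g t) := by
  have h := integrable_mul_exp_neg_mul_sq (b := (1/2:ℝ)) (by norm_num)
  exact h.congr (Filter.Eventually.of_forall fun t => by simp [g_eq])

lemma int_t2g : Integrable (fun t : ℝ => t ^ 2 * g t) := by
  have h := integrable_rpow_mul_exp_neg_mul_sq (b := (1/2:ℝ)) (by norm_num)
    (s := 2) (by norm_num)
  refine h.congr (Filter.Eventually.of_forall fun t => ?_)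
  simp [g_eq, Real.rpow_two]

/-- any quadratic times gaussian is integrable -/
lemma int_quad (a b c : ℝ) : Integrable (fun t : ℝ => (a * t ^ 2 + b * t + c) * g t) := by
  have h := ((int_t2g.const_mul a).add (int_tg.const_mul b)).add (int_g.const_mul c)
  exact h.congr (Filter.Eventually.of_forall fun t => by simp; ring)

lemma int_absg (a b : ℝ) : Integrable (fun t : ℝ => |a * t + b| * g t) := by
  refine Integrable.mono' (int_quad (a^2/2) (a*b) ((b^2+1)/2)) ?_
    (Filter.Eventually.of_forall fun t => ?_)
  · exact ((continuous_abs.comp (by continuity)).mul cont_g).aestronglyMeasurable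
  · rw [Real.norm_eq_abs, abs_mul, abs_of_nonneg (g_nonneg t), abs_abs]
    have h1 : |a * t + b| ≤ a^2/2 * t^2 + a*b*t + (b^2+1)/2 := by
      cases abs_cases (a * t + b) with
      | inl h => rw [h.1]; nlinarith [sq_nonneg (a*t + b - 1)]
      | inr h => rw [h.1]; nlinarith [sq_nonneg (a*t + b + 1)]
    exact mul_le_mul_of_nonneg_right h1 (g_nonneg t)

lemma I0 : ∫ t : ℝ, g t = Real.sqrt (2 * Real.pi) := by
  have h := integral_gaussian (1/2 : ℝ)
  rw [show Real.pi / (1/2:ℝ) = 2 * Real.pi by ring] at h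
  rw [← h]
  exact integral_congr_ae (Filter.Eventually.of_forall fun t => g_eq t)

lemma I1 : ∫ t : ℝ, t * g t = 0 := by
  have h := integral_neg_eq_self (fun t : ℝ => t * g t) volume
  have h2 : ∀ t : ℝ, (-t) * g (-t) = -(t * g t) := by
    intro t; unfold g; rw [neg_sq]; ring
  simp_rw [h2, integral_neg] at h
  linarith

lemma hd_g (t : ℝ) : HasDerivAt g (-t * g t) t := by
  have h1 : HasDerivAt (fun s : ℝ => -s ^ 2 / 2) (-t) t := by
    have := ((hasDerivAt_pow 2 t).neg).div_const 2
    exact this.congr_deriv (by push_cast; ring)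
  have h2 := h1.exp
  exact h2.congr_deriv (by unfold g; ring)

lemma hd_tg (t : ℝ) : HasDerivAt (fun s : ℝ => -(s * g s)) ((t ^ 2 - 1) * g t) t := by
  have h := ((hasDerivAt_id t).mul (hd_g t)).neg
  simp only [id_eq] at h
  exact h.congr_deriv (by ring)

lemma tendsto_g_atTop : Tendsto g atTop (𝓝 0) := by
  have hsq : Tendsto (fun t : ℝ => 1/2 * t ^ 2) atTop atTop :=
    (tendsto_pow_atTop two_ne_zero).const_mul_atTop (by norm_num)
  have h := Real.tendsto_exp_neg_atTop_nhds_zero.comp hsq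
  refine h.congr fun t => ?_
  simp only [Function.comp_apply, g_eq]
  ring_nf

lemma tendsto_tg_atTop : Tendsto (fun t : ℝ => t * g t) atTop (𝓝 0) := by
  have hb : Tendsto (fun t : ℝ => t * Real.exp (-t)) atTop (𝓝 0) := by
    simpa using tendsto_pow_mul_exp_neg_atTop_nhds_zero 1
  refine tendsto_of_tendsto_of_tendsto_of_le_of_le' tendsto_const_nhds hb ?_ ?_
  · filter_upwards [eventually_ge_atTop (0:ℝ)] with t ht
    exact mul_nonneg ht (g_nonneg t)
  · filter_upwards [eventually_ge_atTop (2:ℝ)] with t ht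
    have h1 : g t ≤ Real.exp (-t) := by
      unfold g
      apply Real.exp_le_exp.mpr
      nlinarith
    exact mul_le_mul_of_nonneg_left h1 (by linarith)

lemma tendsto_ntg_atBot : Tendsto (fun t : ℝ => -(t * g t)) atBot (𝓝 0) := by
  have h := tendsto_tg_atTop.comp tendsto_neg_atBot_atTop
  refine h.congr fun t => ?_
  show (-t) * g (-t) = -(t * g t)
  unfold g; rw [neg_sq]; ring

lemma tendsto_ntg_atTop : Tendsto (fun t : ℝ => -(t * g t)) atTop (𝓝 0) := by
  simpa using tendsto_tg_atTop.neg

lemma int_sub1 : Integrable (fun t : ℝ => (t ^ 2 - 1) * g t) :=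
  (int_quad 1 0 (-1)).congr (Filter.Eventually.of_forall fun t => by ring_nf)

lemma I2 : ∫ t : ℝ, t ^ 2 * g t = Real.sqrt (2 * Real.pi) := by
  have hIoi : ∫ t in Ioi (0:ℝ), (t ^ 2 - 1) * g t = 0 := by
    have := integral_Ioi_of_hasDerivAt_of_tendsto' (a := 0)
      (fun t _ => hd_tg t) int_sub1.integrableOn tendsto_ntg_atTop
    simpa [g] using this
  have hIic : ∫ t in Iic (0:ℝ), (t ^ 2 - 1) * g t = 0 := by
    have := integral_Iic_of_hasDerivAt_of_tendsto' (a := 0)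
      (fun t _ => hd_tg t) int_sub1.integrableOn tendsto_ntg_atBot
    simpa [g] using this
  have hsplit : ∫ t : ℝ, (t ^ 2 - 1) * g t = 0 := by
    rw [← intervalIntegral.integral_Iic_add_Ioi (b := (0:ℝ)) int_sub1.integrableOn
      int_sub1.integrableOn, hIic, hIoi, add_zero]
  have h2 : ∫ t : ℝ, (t ^ 2 - 1) * g t = (∫ t : ℝ, t ^ 2 * g t) - ∫ t : ℝ, g t := by
    rw [← integral_sub int_t2g int_g]
    exact integral_congr_ae (Filter.Eventually.of_forall fun t => by ring)
  rw [h2, I0] at hsplit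
  linarith

/-- FTC: tail integral of t*g. -/
lemma tail_tg (u : ℝ) : ∫ t in Ioi u, t * g t = g u := by
  have hderiv : ∀ t ∈ Ici u, HasDerivAt (fun s : ℝ => -g s) (t * g t) t := by
    intro t _
    exact (hd_g t).neg.congr_deriv (by ring)
  have htend : Tendsto (fun s : ℝ => -g s) atTop (𝓝 0) := by
    simpa using tendsto_g_atTop.neg
  have := integral_Ioi_of_hasDerivAt_of_tendsto' hderiv int_tg.integrableOn htend
  simpa using this

end Stmt13Aux

open Stmt13Aux Real Set Filter in
/-- For σ > 0 and x ≥ 0, with u = x/σ, φ the standard normal pdf and Φ its cdf: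
2σφ(u) - 2σu(1 - Φ(u)) ≤ sqrt(σ² + x²) - x. -/
theorem stmt_13 (σ x : ℝ) (hσ : 0 < σ) (hx : 0 ≤ x) :
    let u := x / σ
    let φ : ℝ → ℝ := fun t => Real.exp (-t ^ 2 / 2) / Real.sqrt (2 * Real.pi)
    let Φ : ℝ → ℝ := fun t => (gaussianReal 0 1 (Set.Iic t)).toReal
    2 * σ * φ u - 2 * σ * u * (1 - Φ u) ≤ Real.sqrt (σ ^ 2 + x ^ 2) - x := by
  intro u φ Φ
  have hu : u = x / σ := rfl
  set K := Real.sqrt (2 * Real.pi) with hKdef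
  have hK : 0 < K := Real.sqrt_pos.mpr (by positivity)
  set c := Real.sqrt (σ ^ 2 + x ^ 2) with hcdef
  have hc : 0 < c := Real.sqrt_pos.mpr (by positivity)
  have hc2 : c ^ 2 = σ ^ 2 + x ^ 2 := Real.sq_sqrt (by positivity)
  -- Φ u as an integral
  have hΦ : Φ u = (∫ t in Iic u, g t) / K := by
    show (gaussianReal 0 1 (Set.Iic u)).toReal = _
    rw [gaussianReal_apply_eq_integral 0 one_ne_zero (Set.Iic u)]
    rw [ENNReal.toReal_ofReal (setIntegral_nonneg measurableSet_Iic
      (fun t _ => gaussianPDFReal_nonneg 0 1 t))]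
    rw [← integral_div]
    refine setIntegral_congr_ae measurableSet_Iic (Filter.Eventually.of_forall fun t _ => ?_)
    simp only [gaussianPDFReal, g, hKdef, NNReal.coe_one, mul_one, sub_zero, Real.sqrt_one]
    have h2 : Real.sqrt 2 ≠ 0 := by positivity
    have hpi : Real.sqrt Real.pi ≠ 0 := by positivity
    rw [Real.sqrt_mul (by norm_num : (0:ℝ) ≤ 2)]
    field_simp
  -- split total mass
  have hsplit : (∫ t in Iic u, g t) + (∫ t in Ioi u, g t) = K := by
    rw [intervalIntegral.integral_Iic_add_Ioi int_g.integrableOn int_g.integrableOn, I0]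
  have h1mΦ : 1 - Φ u = (∫ t in Ioi u, g t) / K := by
    rw [hΦ]
    field_simp
    linarith
  -- LHS as tail integral
  have hφu : φ u = g u / K := rfl
  have htail : ∫ t in Ioi u, (t - u) * g t = g u - u * ∫ t in Ioi u, g t := by
    rw [← tail_tg u, ← integral_const_mul, ← integral_sub int_tg.integrableOn
      ((int_g.const_mul u).integrableOn)]
    exact setIntegral_congr_ae measurableSet_Ioi (Filter.Eventually.of_forall fun t _ => by ring)
  -- integrability facts
  have habs_int : Integrable (fun t : ℝ => |t - u| * g t) := by
    have := int_absg 1 (-u)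
    exact this.congr (Filter.Eventually.of_forall fun t => by norm_num [sub_eq_add_neg])
  have hhalf_int : Integrable (fun t : ℝ => ((t - u) + |t - u|) / 2 * g t) := by
    have h := ((int_quad 0 1 (-u)).add habs_int).div_const 2
    refine h.congr (Filter.Eventually.of_forall fun t => ?_)
    simp only [Pi.add_apply]
    ring
  -- (t-u) on Ioi u equals ((t-u)+|t-u|)/2 globally
  have hglobal : ∫ t in Ioi u, (t - u) * g t = ∫ t : ℝ, ((t - u) + |t - u|) / 2 * g t := by
    rw [← intervalIntegral.integral_Iic_add_Ioi (b := u) hhalf_int.integrableOn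
      hhalf_int.integrableOn]
    have hIic0 : ∫ t in Iic u, ((t - u) + |t - u|) / 2 * g t = 0 := by
      rw [show (0:ℝ) = ∫ t in Iic u, (0:ℝ) by simp]
      refine setIntegral_congr_ae measurableSet_Iic (Filter.Eventually.of_forall fun t ht => ?_)
      rw [abs_of_nonpos (sub_nonpos.mpr ht)]
      ring
    have hIoieq : ∫ t in Ioi u, ((t - u) + |t - u|) / 2 * g t = ∫ t in Ioi u, (t - u) * g t := by
      refine setIntegral_congr_ae measurableSet_Ioi (Filter.Eventually.of_forall fun t ht => ?_)
      rw [abs_of_nonneg (sub_nonneg.mpr (le_of_lt ht))]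
      ring
    rw [hIic0, hIoieq, zero_add]
  -- compute the global integral
  have hlin : ∫ t : ℝ, ((t - u) + |t - u|) / 2 * g t
      = (-u * K + ∫ t : ℝ, |t - u| * g t) / 2 := by
    have he : (fun t : ℝ => ((t - u) + |t - u|) / 2 * g t)
        = fun t : ℝ => ((t * g t + (-u) * g t) + |t - u| * g t) / 2 := by
      funext t; ring
    have hA : Integrable (fun t : ℝ => t * g t + (-u) * g t) := int_tg.add (int_g.const_mul (-u))
    rw [he, integral_div, integral_add hA habs_int,
      integral_add int_tg (int_g.const_mul (-u)), I1, integral_const_mul, I0]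
    ring
  -- bound the absolute moment
  have hbound : ∫ t : ℝ, |t - u| * g t ≤ (c / σ) * K := by
    have hpoint : ∀ t : ℝ, |t - u| * g t
        ≤ ((σ^2/(2*σ*c)) * t ^ 2 + ((-(2*σ*x))/(2*σ*c)) * t + ((x^2 + c^2)/(2*σ*c))) * g t := by
      intro t
      refine mul_le_mul_of_nonneg_right ?_ (g_nonneg t)
      rw [div_mul_eq_mul_div, div_mul_eq_mul_div, ← add_div, ← add_div,
        le_div_iff₀ (by positivity)]
      have key : |t - u| * (2 * σ * c) = 2 * c * |σ * t - x| := by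
        rw [show σ * t - x = σ * (t - u) by rw [hu]; field_simp, abs_mul, abs_of_pos hσ]
        ring
      rw [key]
      nlinarith [sq_nonneg (|σ * t - x| - c), sq_abs (σ * t - x), abs_nonneg (σ * t - x)]
    have hI := integral_mono habs_int (int_quad _ _ _) hpoint
    refine le_trans hI (le_of_eq ?_)
    rw [show (fun t : ℝ => ((σ^2/(2*σ*c)) * t ^ 2 + ((-(2*σ*x))/(2*σ*c)) * t
        + ((x^2 + c^2)/(2*σ*c))) * g t)
      = fun t : ℝ => σ^2/(2*σ*c) * (t ^ 2 * g t) + ((-(2*σ*x))/(2*σ*c) * (t * g t)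
        + (x^2 + c^2)/(2*σ*c) * g t) by funext t; ring]
    have hB : Integrable (fun t : ℝ => (-(2*σ*x))/(2*σ*c) * (t * g t)
        + (x^2 + c^2)/(2*σ*c) * g t) := (int_tg.const_mul _).add (int_g.const_mul _)
    rw [integral_add (int_t2g.const_mul _) hB,
      integral_add (int_tg.const_mul _) (int_g.const_mul _),
      integral_const_mul, integral_const_mul, integral_const_mul, I0, I1, I2]
    rw [show σ^2/(2*σ*c) * K + ((-(2*σ*x))/(2*σ*c) * 0 + (x^2 + c^2)/(2*σ*c) * K)
        = ((σ^2 + x^2 + c^2) / (2*σ*c)) * K by ring]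
    rw [show σ^2 + x^2 + c^2 = 2 * c^2 by rw [hc2]; ring]
    rw [show (2 * c^2) / (2*σ*c) = c / σ by field_simp]
  -- put everything together
  have hLHS : 2 * σ * φ u - 2 * σ * u * (1 - Φ u)
      = 2 * σ / K * ∫ t in Ioi u, (t - u) * g t := by
    rw [hφu, h1mΦ, htail]
    field_simp
  rw [hLHS, hglobal, hlin]
  have hmul : 2 * σ / K * ((-u * K + ∫ t : ℝ, |t - u| * g t) / 2)
      ≤ 2 * σ / K * ((-u * K + (c / σ) * K) / 2) := by
    exact mul_le_mul_of_nonneg_left (by linarith [hbound]) (by positivity)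
  refine le_trans hmul (le_of_eq ?_)
  rw [hu]
  field_simp
  ring
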